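/- For G = S_p acting on ℤ_(p)[x_1,…,x_p] by permuting variables, the image of the transfer map equals the ideal ⟨p, e_1, e_2, …, e_{p−1}⟩ of ℤ_(p)[e_1,…,e_p]. -/

import Mathlib

open MvPolynomial

/-- The prime ideal `(p)` of `ℤ`. -/
abbrev pIdeal (p : ℕ) : Ideal ℤ := Ideal.span {(p : ℤ)}

instance pIdeal_isPrime (p : ℕ) [hp : Fact p.Prime] : (pIdeal p).IsPrime :=
  (Ideal.span_singleton_prime (by exact_mod_cast hp.out.ne_zero)).mpr
    (Nat.prime_iff_prime_int.mp hp.out)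

/-- `ℤ_(p)`, the localization of `ℤ` at the prime `p`. -/
abbrev Zp (p : ℕ) [Fact p.Prime] : Type := Localization.AtPrime (pIdeal p)

/-- The `j`-th elementary symmetric polynomial in `n` variables over `ℤ_(p)`, as an element
of the invariant ring `ℤ_(p)[e_1,…,e_n]` (the subalgebra of symmetric polynomials). -/
noncomputable def eA (p : ℕ) [Fact p.Prime] (n : ℕ) (j : ℕ) :
    (symmetricSubalgebra (Fin n) (Zp p)) :=
  ⟨esymm (Fin n) (Zp p) j,
    (mem_symmetricSubalgebra _).mpr (esymm_isSymmetric (Fin n) (Zp p) j)⟩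

set_option linter.unusedSectionVars false

section AuxGeneric
variable {k : Type*} [CommRing k] {p : ℕ}

lemma prod_single_support (ℓ : Fin p) (m : Fin p →₀ ℕ) (hm : m = Finsupp.single ℓ (m ℓ))
    (s : Fin p → Polynomial k) :
    ∏ i ∈ m.support, s i ^ m i = s ℓ ^ m ℓ := by
  by_cases h0 : m ℓ = 0
  · rw [hm, h0, Finsupp.single_zero]
    simp
  · rw [hm]
    rw [Finsupp.support_single_ne_zero _ h0]
    simp [Finsupp.single_eq_same]

lemma coeff_single_eq_zero_of_eval₂ (hp0 : 2 ≤ p) (q : MvPolynomial (Fin p) k)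
    (h : eval₂ Polynomial.C
        (fun i : Fin p => if (i : ℕ) < p - 1 then 0 else Polynomial.X ^ p) q = 0)
    (d : ℕ) : coeff (Finsupp.single (⟨p - 1, by omega⟩ : Fin p) d) q = 0 := by
  set ℓ : Fin p := ⟨p - 1, by omega⟩ with hℓ
  set s : Fin p → Polynomial k :=
    fun i => if (i : ℕ) < p - 1 then 0 else Polynomial.X ^ p with hs
  have hsℓ : s ℓ = Polynomial.X ^ p := by simp [hs, hℓ]
  have h0 : ∀ m ∈ q.support, m ≠ Finsupp.single ℓ d →
      (Polynomial.C (coeff m q) * ∏ i ∈ m.support, s i ^ m i).coeff (p * d) = 0 := by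
    intro m hmem hne
    by_cases hsub : m.support ⊆ {ℓ}
    · have hm := Finsupp.support_subset_singleton.mp hsub
      have hd : m ℓ ≠ d := fun hd => hne (by rw [hm, hd])
      rw [prod_single_support ℓ m hm s, hsℓ, ← pow_mul, Polynomial.coeff_C_mul,
        Polynomial.coeff_X_pow, if_neg, mul_zero]
      exact fun hEq => hd (Nat.eq_of_mul_eq_mul_left (by omega) hEq).symm
    · obtain ⟨i, hi, hiℓ⟩ := Finset.not_subset.mp hsub
      have hilt : (i : ℕ) < p - 1 := by
        have h1 : (i : ℕ) < p := i.isLt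
        have h2 : (i : ℕ) ≠ p - 1 := fun hv => hiℓ (by
          simp only [Finset.mem_singleton]
          exact Fin.ext (by rw [hv]))
        omega
      have hzero : s i ^ m i = 0 := by
        rw [hs]
        simp only [if_pos hilt]
        exact zero_pow (Finsupp.mem_support_iff.mp hi)
      rw [Finset.prod_eq_zero hi hzero, mul_zero, Polynomial.coeff_zero]
  have h1 : Finsupp.single ℓ d ∉ q.support →
      (Polynomial.C (coeff (Finsupp.single ℓ d) q) *
        ∏ i ∈ (Finsupp.single ℓ d).support, s i ^ (Finsupp.single ℓ d) i).coeff (p * d) = 0 := by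
    intro hmem
    rw [notMem_support_iff.mp hmem]
    simp
  have key : (eval₂ Polynomial.C s q).coeff (p * d) = coeff (Finsupp.single ℓ d) q := by
    rw [eval₂_eq, Polynomial.finset_sum_coeff, Finset.sum_eq_single _ h0 h1,
      prod_single_support ℓ _ (by rw [Finsupp.single_eq_same]) s, hsℓ,
      Finsupp.single_eq_same, ← pow_mul, Polynomial.coeff_C_mul, Polynomial.coeff_X_pow,
      if_pos rfl, mul_one]
  rw [← key, h, Polynomial.coeff_zero]
end AuxGeneric

section AuxGeneric2
variable {R : Type*} [CommRing R] {p : ℕ}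

lemma mem_J (hp0 : 2 ≤ p) (q : MvPolynomial (Fin p) R)
    (hq : ∀ d : ℕ, ((p : ℕ) : R) ∣ coeff (Finsupp.single (⟨p - 1, by omega⟩ : Fin p) d) q) :
    q ∈ Ideal.span ({((p : ℕ) : MvPolynomial (Fin p) R)} ∪
      (X '' {i : Fin p | (i : ℕ) < p - 1})) := by
  set ℓ : Fin p := ⟨p - 1, by omega⟩ with hℓ
  rw [q.as_sum]
  refine Ideal.sum_mem _ fun m hmem => ?_
  by_cases hsub : m.support ⊆ {ℓ}
  · have hm := Finsupp.support_subset_singleton.mp hsub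
    obtain ⟨u, hu⟩ := hq (m ℓ)
    have hcoeff : coeff m q = ((p : ℕ) : R) * u := by
      conv_lhs => rw [hm]
      exact hu
    have : monomial m (coeff m q) = ((p : ℕ) : MvPolynomial (Fin p) R) * monomial m u := by
      rw [hcoeff, show ((p : ℕ) : MvPolynomial (Fin p) R) = C ((p : ℕ) : R) from
        (map_natCast C p).symm, C_mul_monomial]
    rw [this]
    exact Ideal.mul_mem_right _ _ (Ideal.subset_span (Set.mem_union_left _ rfl))
  · obtain ⟨i, hi, hiℓ⟩ := Finset.not_subset.mp hsub
    have hilt : (i : ℕ) < p - 1 := by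
      have h1 : (i : ℕ) < p := i.isLt
      have h2 : (i : ℕ) ≠ p - 1 := fun hv => hiℓ (by
        simp only [Finset.mem_singleton]; exact Fin.ext (by rw [hv, hℓ]))
      omega
    have hmi : 1 ≤ m i := Nat.one_le_iff_ne_zero.mpr (Finsupp.mem_support_iff.mp hi)
    have hdecomp : m = Finsupp.single i 1 + (m - Finsupp.single i 1) := by
      ext j
      rw [Finsupp.add_apply, Finsupp.tsub_apply]
      by_cases hj : j = i
      · subst hj; rw [Finsupp.single_eq_same]; omega
      · rw [Finsupp.single_eq_of_ne' (fun h => hj h.symm)]; omega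
    have : monomial m (coeff m q) = X i * monomial (m - Finsupp.single i 1) (coeff m q) := by
      rw [X, monomial_mul, one_mul, ← hdecomp]
    rw [this]
    exact Ideal.mul_mem_right _ _ (Ideal.subset_span
      (Set.mem_union_right _ ⟨i, hilt, rfl⟩))
end AuxGeneric2

section AuxZp
variable (p : ℕ) [hp : Fact p.Prime]

lemma isUnit_natCast_Zp (n : ℕ) (h : ¬ p ∣ n) : IsUnit ((n : ℕ) : Zp p) := by
  have : ((n:ℤ)) ∈ (pIdeal p).primeCompl := by
    simp only [Ideal.primeCompl, Submonoid.mem_mk, Subsemigroup.mem_mk, Set.mem_compl_iff,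
      SetLike.mem_coe, Ideal.mem_span_singleton]
    exact_mod_cast fun hd => h (Int.ofNat_dvd.mp (by exact_mod_cast hd))
  have := IsLocalization.map_units (M := (pIdeal p).primeCompl) (Zp p) ⟨(n:ℤ), this⟩
  simpa using this

lemma dvd_of_mk_eq_zero (c : Zp p) (h : Ideal.Quotient.mk (Ideal.span {((p:ℕ) : Zp p)}) c = 0) :
    ((p:ℕ) : Zp p) ∣ c := by
  rw [Ideal.Quotient.eq_zero_iff_mem, Ideal.mem_span_singleton] at h
  exact h

lemma natCast_eq_zero_k (n : ℕ) (h : p ∣ n) :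
    ((n : ℕ) : Zp p ⧸ Ideal.span {((p:ℕ) : Zp p)}) = 0 := by
  obtain ⟨m, rfl⟩ := h
  push_cast
  have : ((p : ℕ) : Zp p ⧸ Ideal.span {((p:ℕ) : Zp p)}) = 0 := by
    rw [← map_natCast (Ideal.Quotient.mk (Ideal.span {((p:ℕ) : Zp p)})),
      Ideal.Quotient.eq_zero_iff_mem]
    exact Ideal.mem_span_singleton_self _
  rw [this, zero_mul]
end AuxZp

section AuxMain
variable {p : ℕ} [hp : Fact p.Prime]

noncomputable def T (f : MvPolynomial (Fin p) (Zp p)) : MvPolynomial (Fin p) (Zp p) :=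
  ∑ σ : Equiv.Perm (Fin p), rename (⇑σ) f

lemma T_isSymmetric (f : MvPolynomial (Fin p) (Zp p)) : (T f).IsSymmetric := by
  intro τ
  rw [T, map_sum]
  refine Fintype.sum_equiv (Equiv.mulLeft τ) _ _ fun σ => ?_
  rw [rename_rename]
  rfl

lemma T_add (f g : MvPolynomial (Fin p) (Zp p)) : T (f + g) = T f + T g := by
  simp [T, map_add, Finset.sum_add_distrib]

lemma T_smul (r : Zp p) (f : MvPolynomial (Fin p) (Zp p)) : T (r • f) = r • T f := by
  simp [T, Finset.smul_sum]

lemma T_mul_symm {g : MvPolynomial (Fin p) (Zp p)} (hg : g.IsSymmetric)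
    (f : MvPolynomial (Fin p) (Zp p)) : T (g * f) = g * T f := by
  rw [T, T, Finset.mul_sum]
  refine Finset.sum_congr rfl fun σ _ => ?_
  rw [map_mul, hg σ]

-- counting
lemma exists_perm_image (s t : Finset (Fin p)) (h : s.card = t.card) :
    ∃ τ : Equiv.Perm (Fin p), s.image ⇑τ = t := by
  have hc : Fintype.card {x // x ∈ s} = Fintype.card {x // x ∈ t} := by
    simpa [Fintype.card_coe] using h
  let e := Fintype.equivOfCardEq hc
  refine ⟨e.extendSubtype, ?_⟩
  apply Finset.eq_of_subset_of_card_le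
  · intro x hx
    obtain ⟨y, hy, rfl⟩ := Finset.mem_image.mp hx
    exact e.extendSubtype_mem y hy
  · rw [Finset.card_image_of_injective _ e.extendSubtype.injective, h]

lemma fiber_card_eq (s t t' : Finset (Fin p)) (h : t.card = t'.card) :
    (Finset.univ.filter (fun σ : Equiv.Perm (Fin p) => s.image ⇑σ = t)).card =
    (Finset.univ.filter (fun σ : Equiv.Perm (Fin p) => s.image ⇑σ = t')).card := by
  obtain ⟨τ, hτ⟩ := exists_perm_image t t' h
  refine Finset.card_bij' (fun σ _ => τ * σ) (fun σ _ => τ⁻¹ * σ) ?_ ?_ ?_ ?_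
  · intro σ hσ
    simp only [Finset.mem_filter, Finset.mem_univ, true_and] at hσ ⊢
    rw [Equiv.Perm.coe_mul, ← Finset.image_image, hσ, hτ]
  · intro σ hσ
    simp only [Finset.mem_filter, Finset.mem_univ, true_and] at hσ ⊢
    rw [Equiv.Perm.coe_mul, ← Finset.image_image, hσ, ← hτ, Finset.image_image]
    simp [Function.comp_def]
  · intro σ _; exact inv_mul_cancel_left τ σ
  · intro σ _; exact mul_inv_cancel_left τ σ

lemma T_prod_X (s : Finset (Fin p)) :
    T (∏ i ∈ s, X i : MvPolynomial (Fin p) (Zp p)) =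
      (Finset.univ.filter (fun σ : Equiv.Perm (Fin p) => s.image ⇑σ = s)).card •
        esymm (Fin p) (Zp p) s.card := by
  have hmaps : ∀ σ ∈ (Finset.univ : Finset (Equiv.Perm (Fin p))),
      s.image ⇑σ ∈ Finset.powersetCard s.card Finset.univ := fun σ _ =>
    Finset.mem_powersetCard.mpr ⟨Finset.subset_univ _,
      Finset.card_image_of_injective _ σ.injective⟩
  have key : T (∏ i ∈ s, X i : MvPolynomial (Fin p) (Zp p)) =
      ∑ t ∈ Finset.powersetCard s.card Finset.univ,
        ∑ σ ∈ Finset.univ.filter (fun σ : Equiv.Perm (Fin p) => s.image ⇑σ = t),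
          ∏ i ∈ t, (X i : MvPolynomial (Fin p) (Zp p)) := by
    rw [T]
    rw [← Finset.sum_fiberwise_of_maps_to hmaps
      (fun σ : Equiv.Perm (Fin p) => rename (⇑σ) (∏ i ∈ s, X i))]
    refine Finset.sum_congr rfl fun t _ => Finset.sum_congr rfl fun σ hσ => ?_
    rw [Finset.mem_filter] at hσ
    rw [map_prod, ← hσ.2, Finset.prod_image (fun a _ b _ h => σ.injective h)]
    simp [rename_X]
  rw [key, esymm, nsmul_eq_mul, Finset.mul_sum]
  refine Finset.sum_congr rfl fun t ht => ?_
  rw [Finset.sum_const, nsmul_eq_mul]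
  congr 2
  exact fiber_card_eq s t s ((Finset.mem_powersetCard.mp ht).2)

lemma fiber_mul_choose (s : Finset (Fin p)) :
    (Finset.univ.filter (fun σ : Equiv.Perm (Fin p) => s.image ⇑σ = s)).card *
      Nat.choose p s.card = Nat.factorial p := by
  have h := Finset.card_eq_sum_card_fiberwise
    (f := fun σ : Equiv.Perm (Fin p) => s.image ⇑σ)
    (s := Finset.univ) (t := Finset.powersetCard s.card Finset.univ)
    (fun σ _ => Finset.mem_powersetCard.mpr ⟨Finset.subset_univ _,
      Finset.card_image_of_injective _ σ.injective⟩)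
  rw [Finset.card_univ, Fintype.card_perm, Fintype.card_fin] at h
  have h2 : ∑ t ∈ Finset.powersetCard s.card (Finset.univ : Finset (Fin p)),
      (Finset.univ.filter (fun σ : Equiv.Perm (Fin p) => s.image ⇑σ = t)).card =
      ∑ _t ∈ Finset.powersetCard s.card (Finset.univ : Finset (Fin p)),
      (Finset.univ.filter (fun σ : Equiv.Perm (Fin p) => s.image ⇑σ = s)).card :=
    Finset.sum_congr rfl (fun t ht =>
      fiber_card_eq s t s ((Finset.mem_powersetCard.mp ht).2))
  rw [h2, Finset.sum_const, Finset.card_powersetCard, Finset.card_univ, Fintype.card_fin,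
    smul_eq_mul, mul_comm] at h
  exact h.symm
lemma not_dvd_pred_factorial : ¬ p ∣ Nat.factorial (p - 1) := fun h =>
  Nat.not_succ_le_self (p - 1)
    (by simpa [Nat.sub_add_cancel hp.out.one_lt.le] using
      (Nat.Prime.dvd_factorial hp.out).mp h)

lemma exists_T_natCast : ∃ f, T f = ((p : ℕ) : MvPolynomial (Fin p) (Zp p)) := by
  obtain ⟨u, hu⟩ := isUnit_natCast_Zp p (Nat.factorial (p - 1)) not_dvd_pred_factorial
  refine ⟨C (↑u⁻¹ : Zp p), ?_⟩
  rw [T]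
  simp only [rename_C]
  rw [Finset.sum_const, Finset.card_univ, Fintype.card_perm, Fintype.card_fin,
    nsmul_eq_mul]
  rw [show ((Nat.factorial p : ℕ) : MvPolynomial (Fin p) (Zp p))
      = C ((Nat.factorial p : ℕ) : Zp p) from (map_natCast C _).symm,
    show (((p : ℕ)) : MvPolynomial (Fin p) (Zp p))
      = C (((p : ℕ)) : Zp p) from (map_natCast C _).symm, ← map_mul]
  congr 1
  have hfac : ((Nat.factorial p : ℕ) : Zp p)
      = ((p : ℕ) : Zp p) * ((Nat.factorial (p-1) : ℕ) : Zp p) := by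
    rw [← Nat.cast_mul, Nat.mul_factorial_pred hp.out.ne_zero]
  rw [hfac, ← hu, mul_assoc, Units.mul_inv, mul_one]

lemma exists_T_esymm (j : ℕ) (h1 : 1 ≤ j) (h2 : j ≤ p - 1) :
    ∃ f, T f = esymm (Fin p) (Zp p) j := by
  obtain ⟨s, -, hs⟩ := Finset.exists_subset_card_eq (show j ≤ (Finset.univ : Finset (Fin p)).card
    by rw [Finset.card_univ, Fintype.card_fin]; omega)
  set c := (Finset.univ.filter (fun σ : Equiv.Perm (Fin p) => s.image ⇑σ = s)).card with hc
  have hcc := fiber_mul_choose s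
  rw [hs] at hcc
  have hpc : ¬ p ∣ c := by
    intro hdvd
    have hchoose : p ∣ Nat.choose p j :=
      hp.out.dvd_choose_self (by omega) (by have := hp.out.two_le; omega)
    have : p * p ∣ Nat.factorial p := hcc ▸ mul_dvd_mul hdvd hchoose
    rw [← Nat.mul_factorial_pred hp.out.ne_zero] at this
    exact not_dvd_pred_factorial
      ((mul_dvd_mul_iff_left (by exact_mod_cast hp.out.ne_zero : (p:ℕ) ≠ 0)).mp this)
  obtain ⟨u, hu⟩ := isUnit_natCast_Zp p c hpc
  refine ⟨(↑u⁻¹ : Zp p) • ∏ i ∈ s, X i, ?_⟩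
  rw [T_smul, T_prod_X, hs, ← hc, ← Nat.cast_smul_eq_nsmul (Zp p), smul_smul, ← hu,
    Units.inv_mul, one_smul]
/-- the quotient ring `k = Z_(p)/p` -/
noncomputable abbrev kk (p : ℕ) [Fact p.Prime] : Type :=
  Zp p ⧸ Ideal.span {((p : ℕ) : Zp p)}

noncomputable def mkk : Zp p →+* kk p := Ideal.Quotient.mk _

noncomputable def Φ : MvPolynomial (Fin p) (Zp p) →+* Polynomial (kk p) :=
  eval₂Hom (R := Zp p) (S₁ := Polynomial (kk p)) ((Polynomial.C : kk p →+* Polynomial (kk p)).comp mkk)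
    (fun _ : Fin p => Polynomial.X)

lemma Φ_rename (σ : Equiv.Perm (Fin p)) (f : MvPolynomial (Fin p) (Zp p)) :
    Φ (rename (⇑σ) f) = Φ f := by
  rw [Φ, coe_eval₂Hom, eval₂_rename]
  rfl

lemma Φ_T (f : MvPolynomial (Fin p) (Zp p)) : Φ (T f) = 0 := by
  rw [T, map_sum]
  rw [Finset.sum_congr rfl fun σ _ => Φ_rename σ f, Finset.sum_const, Finset.card_univ,
    Fintype.card_perm, Fintype.card_fin, nsmul_eq_mul]
  have : ((Nat.factorial p : ℕ) : Polynomial (kk p)) = 0 := by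
    rw [← map_natCast (Polynomial.C : kk p →+* Polynomial (kk p)),
      natCast_eq_zero_k p _ (Nat.dvd_factorial hp.out.pos le_rfl), map_zero]
  rw [this, zero_mul]

lemma Φ_esymm (j : ℕ) : Φ (esymm (Fin p) (Zp p) j) =
    (Nat.choose p j) • ((Polynomial.X : Polynomial (kk p)) ^ j) := by
  rw [esymm, map_sum]
  rw [Finset.sum_congr rfl (fun t ht => ?_), Finset.sum_const, Finset.card_powersetCard,
    Finset.card_univ, Fintype.card_fin]
  · rw [map_prod]
    rw [Finset.prod_congr rfl (fun i _ => ?_), Finset.prod_const,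
      (Finset.mem_powersetCard.mp ht).2]
    rw [Φ, coe_eval₂Hom, eval₂_X]

lemma Φ_esymm_eq_ite (i : Fin p) : Φ (esymm (Fin p) (Zp p) ((i : ℕ) + 1)) =
    (if (i : ℕ) < p - 1 then 0 else Polynomial.X ^ p : Polynomial (kk p)) := by
  by_cases hi : (i : ℕ) < p - 1
  · rw [Φ_esymm, if_pos hi, nsmul_eq_mul, ← map_natCast (Polynomial.C : kk p →+* _),
      natCast_eq_zero_k p _ (hp.out.dvd_choose_self (by omega)
        (by have := hp.out.two_le; omega)), map_zero, zero_mul]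
  · have : (i : ℕ) + 1 = p := by have h1 : (i : ℕ) < p := i.isLt; omega
    rw [this, Φ_esymm, if_neg hi, Nat.choose_self, one_smul]
lemma T_mem_ideal (f : MvPolynomial (Fin p) (Zp p)) :
    (⟨T f, (mem_symmetricSubalgebra _).mpr (T_isSymmetric f)⟩ :
        symmetricSubalgebra (Fin p) (Zp p)) ∈
      Ideal.span (({((p : ℕ) : symmetricSubalgebra (Fin p) (Zp p))} : Set _) ∪
        ((fun j => eA p p j) '' Set.Icc 1 (p - 1))) := by
  have hp0 : 2 ≤ p := hp.out.two_le
  set E := esymmAlgHom (Fin p) (Zp p) p with hE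
  obtain ⟨q, hq⟩ := (esymmAlgHom_fin_bijective (Zp p) p).2
    ⟨T f, (mem_symmetricSubalgebra _).mpr (T_isSymmetric f)⟩
  -- step 1 : Φ of the aeval vanishes
  have hval : aeval (fun i : Fin p => esymm (Fin p) (Zp p) ((i : ℕ) + 1)) q = T f := by
    rw [← esymmAlgHom_apply, hq]
  have h0 : Φ (aeval (fun i : Fin p => esymm (Fin p) (Zp p) ((i : ℕ) + 1)) q) = 0 := by
    rw [hval, Φ_T]
  rw [map_aeval (B := Polynomial (kk p)) (φ := Φ)] at h0
  have h1 : eval₂ Polynomial.C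
      (fun i : Fin p => if (i : ℕ) < p - 1 then 0 else Polynomial.X ^ p)
      (MvPolynomial.map (mkk (p := p)) q) = 0 := by
    rw [eval₂_map]
    rw [coe_eval₂Hom] at h0
    convert h0 using 2
    · rfl
    · ext r
      simp [Φ, algebraMap_eq]
    · funext i
      exact (Φ_esymm_eq_ite i).symm
  -- step 2 : q lands in J
  have hdvd : ∀ d : ℕ, ((p : ℕ) : Zp p) ∣
      coeff (Finsupp.single (⟨p - 1, by omega⟩ : Fin p) d) q := by
    intro d
    have := coeff_single_eq_zero_of_eval₂ hp0 _ h1 d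
    rw [coeff_map] at this
    exact dvd_of_mk_eq_zero p _ this
  have hqJ := mem_J (R := Zp p) (p := p) hp0 q hdvd
  -- step 3 : push through E
  have hmap := Ideal.mem_map_of_mem (E.toRingHom) hqJ
  rw [Ideal.map_span] at hmap
  have himg : (E.toRingHom '' ({((p : ℕ) : MvPolynomial (Fin p) (Zp p))} ∪
      (X '' {i : Fin p | (i : ℕ) < p - 1}))) =
      ({((p : ℕ) : symmetricSubalgebra (Fin p) (Zp p))} : Set _) ∪
        ((fun j => eA p p j) '' Set.Icc 1 (p - 1)) := by
    rw [Set.image_union, Set.image_singleton, Set.image_image]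
    congr 1
    · rw [map_natCast]
    · ext a
      constructor
      · rintro ⟨i, hi, rfl⟩
        refine ⟨(i : ℕ) + 1, ⟨by omega, by simpa using hi⟩, ?_⟩
        rw [hE]
        exact (Subtype.ext (by rw [esymmAlgHom_apply, aeval_X]; rfl) :
          E (X i) = eA p p ((i : ℕ) + 1)).symm
      · rintro ⟨j, hj, rfl⟩
        obtain ⟨hj1, hj2⟩ := hj
        refine ⟨⟨j - 1, by omega⟩, by simpa using (by omega : j - 1 < p - 1), ?_⟩
        exact (Subtype.ext (by
          rw [esymmAlgHom_apply, aeval_X]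
          show esymm (Fin p) (Zp p) ((j - 1) + 1) = esymm (Fin p) (Zp p) j
          rw [show (j - 1) + 1 = j from by omega]) :
            E (X (⟨j - 1, by omega⟩ : Fin p)) = eA p p j)
  rw [himg] at hmap
  have : E q = ⟨T f, (mem_symmetricSubalgebra _).mpr (T_isSymmetric f)⟩ := hq
  rwa [show E.toRingHom q = E q from rfl, this] at hmap
set_option synthInstance.maxHeartbeats 1000000 in
set_option maxHeartbeats 1000000 in
lemma ideal_subset_image (a : symmetricSubalgebra (Fin p) (Zp p))
    (ha : a ∈ Ideal.span (({((p : ℕ) : symmetricSubalgebra (Fin p) (Zp p))} : Set _) ∪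
        ((fun j => eA p p j) '' Set.Icc 1 (p - 1)))) :
    ∃ f, T f = (a : MvPolynomial (Fin p) (Zp p)) := by
  refine Submodule.span_induction ?_ ?_ ?_ ?_ ha
  · rintro x (rfl | ⟨j, ⟨hj1, hj2⟩, rfl⟩)
    · obtain ⟨f, hf⟩ := exists_T_natCast (p := p)
      exact ⟨f, by rw [hf]; push_cast; rfl⟩
    · exact exists_T_esymm j hj1 hj2
  · exact ⟨0, by simp [T]⟩
  · rintro x y - - ⟨f, hf⟩ ⟨g, hg⟩
    exact ⟨f + g, by rw [T_add, hf, hg]; rfl⟩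
  · rintro r x - ⟨f, hf⟩
    refine ⟨(r : MvPolynomial (Fin p) (Zp p)) * f, ?_⟩
    rw [T_mul_symm ((mem_symmetricSubalgebra _).mp r.2), hf]
    rfl
end AuxMain

/-- For `G = S_p` acting on `ℤ_(p)[x_1,…,x_p]` by permuting variables, the
image of the transfer map equals the ideal `⟨p, e_1, …, e_{p−1}⟩` of the invariant ring
`ℤ_(p)[e_1,…,e_p]`. -/
theorem image_transfer_eq_ideal_n_eq_p (p : ℕ) [Fact p.Prime] :
    {x : MvPolynomial (Fin p) (Zp p) |
        ∃ f, ∑ σ : Equiv.Perm (Fin p), rename (⇑σ) f = x} =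
      Subtype.val ''
        (↑(Ideal.span
            (({((p : ℕ) : symmetricSubalgebra (Fin p) (Zp p))} : Set _) ∪
             ((fun j => eA p p j) '' Set.Icc 1 (p - 1)))) :
          Set (symmetricSubalgebra (Fin p) (Zp p))) := by
  ext x
  simp only [Set.mem_setOf_eq, Set.mem_image, SetLike.mem_coe]
  constructor
  · rintro ⟨f, rfl⟩
    exact ⟨⟨T f, (mem_symmetricSubalgebra _).mpr (T_isSymmetric f)⟩, T_mem_ideal f, rfl⟩
  · rintro ⟨a, ha, rfl⟩
    exact ideal_subset_image a ha
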